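/- (O(1/t²) rate of accelerated linearized ALM.) Let γ > 0 and η ≥ 2 L_f. Let (xᵏ)_{k≥1}, (x̄ᵏ)_{k≥1} ⊂ E and (λᵏ)_{k≥1} ⊂ H satisfy x̄¹ = x¹, λ¹ = 0 and, for each k ≥ 1 with α_k = 2/(k+1), γ_k = kγ, β_k ≥ γ_k/2: x̂ᵏ = (1−α_k)x̄ᵏ + α_k xᵏ; there is a subgradient uᵏ of g at x^{k+1} with ∇f(x̂ᵏ) + uᵏ − A*λᵏ + β_k A*(A x^{k+1} − b) + (η/k)(x^{k+1} − xᵏ) = 0; x̄^{k+1} = (1−α_k)x̄ᵏ + α_k x^{k+1}; λ^{k+1} = λᵏ − γ_k(A x^{k+1} − b). Let (x*, λ*) satisfy the KKT conditions with λ* ≠ 0. Then for every t ≥ 1: |F(x̄^{t+1}) − F(x*)| ≤ (1/(t(t+1)))·(η‖x¹ − x*‖² + 4‖λ*‖²/γ) and ‖A x̄^{t+1} − b‖ ≤ (1/(t(t+1)‖λ*‖))·(η‖x¹ − x*‖² + 4‖λ*‖²/γ). -/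

import Mathlib

open scoped RealInnerProductSpace

section aux
variable {E : Type*} [NormedAddCommGroup E] [InnerProductSpace ℝ E] [CompleteSpace E]

lemma aux_line_hasDerivAt (f : E → ℝ) (f' : E → E)
    (hgrad : ∀ x : E, HasGradientAt f (f' x) x) (x v : E) (t : ℝ) :
    HasDerivAt (fun s : ℝ => f (x + s • v)) ⟪f' (x + t • v), v⟫ t := by
  have hc : HasDerivAt (fun s : ℝ => x + s • v) v t := by
    simpa using ((hasDerivAt_id t).smul_const v).const_add x
  have hf := (hgrad (x + t • v)).hasFDerivAt
  have := hf.comp_hasDerivAt t hc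
  simp at this; exact this

omit [CompleteSpace E] in
lemma aux_line_convexOn (f : E → ℝ) (hfconv : ConvexOn ℝ Set.univ f) (x v : E) :
    ConvexOn ℝ Set.univ (fun s : ℝ => f (x + s • v)) := by
  refine ⟨convex_univ, ?_⟩
  intro s _ t _ a b ha hb hab
  have hx : x + (a • s + b • t) • v = a • (x + s • v) + b • (x + t • v) := by
    have : a • (x + s • v) + b • (x + t • v) = (a + b) • x + (a * s + b * t) • v := by
      module
    rw [this, hab, one_smul]; simp [smul_eq_mul]
  simp only []
  rw [hx]
  exact hfconv.2 trivial trivial ha hb hab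

lemma aux_convex_lower (f : E → ℝ) (f' : E → E)
    (hfconv : ConvexOn ℝ Set.univ f)
    (hgrad : ∀ x : E, HasGradientAt f (f' x) x) (x z : E) :
    f x + ⟪f' x, z - x⟫ ≤ f z := by
  set v := z - x with hv
  have hφ := aux_line_convexOn f hfconv x v
  have hder : HasDerivAt (fun s : ℝ => f (x + s • v)) ⟪f' x, v⟫ 0 := by
    have := aux_line_hasDerivAt f f' hgrad x v 0
    simpa using this
  have hsl := hφ.le_slope_of_hasDerivAt (Set.mem_univ 0) (Set.mem_univ 1) one_pos hder
  rw [slope_def_field] at hsl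
  simp only [zero_smul, add_zero, one_smul] at hsl
  have hxz : x + v = z := by rw [hv]; abel
  rw [hxz] at hsl
  have h2 : ⟪f' x, v⟫ ≤ f z - f x := by
    simpa using hsl
  linarith

lemma aux_descent (f : E → ℝ) (f' : E → E) (Lf : ℝ)
    (hgrad : ∀ x : E, HasGradientAt f (f' x) x)
    (hlip : ∀ x x' : E, ‖f' x - f' x'‖ ≤ Lf * ‖x - x'‖) (x y : E) :
    f y ≤ f x + ⟪f' x, y - x⟫ + Lf / 2 * ‖y - x‖ ^ 2 := by
  set v := y - x with hv
  set ψ : ℝ → ℝ := fun t => ⟪f' (x + t • v), v⟫ with hψ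
  have hf'cont : Continuous f' := by
    have : LipschitzWith (Real.toNNReal Lf) f' := by
      apply LipschitzWith.of_dist_le_mul
      intro a b
      rw [dist_eq_norm, dist_eq_norm]
      calc ‖f' a - f' b‖ ≤ Lf * ‖a - b‖ := hlip a b
        _ ≤ Real.toNNReal Lf * ‖a - b‖ := by
            gcongr; exact Real.le_coe_toNNReal Lf
    exact this.continuous
  have hψcont : Continuous ψ := by
    apply Continuous.inner
    · exact hf'cont.comp (by continuity)
    · exact continuous_const
  have hftc : f (x + (1:ℝ) • v) - f (x + (0:ℝ) • v) = ∫ t in (0:ℝ)..1, ψ t := by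
    rw [intervalIntegral.integral_eq_sub_of_hasDerivAt
      (fun t _ => aux_line_hasDerivAt f f' hgrad x v t)
      (hψcont.intervalIntegrable 0 1)]
  have hbound : ∫ t in (0:ℝ)..1, ψ t ≤ ∫ t in (0:ℝ)..1, (ψ 0 + Lf * t * ‖v‖ ^ 2) := by
    apply intervalIntegral.integral_mono_on (by norm_num)
      (hψcont.intervalIntegrable 0 1)
      ((by continuity : Continuous fun t : ℝ => ψ 0 + Lf * t * ‖v‖ ^ 2).intervalIntegrable 0 1)
    intro t ht
    have h1 : ψ t - ψ 0 = ⟪f' (x + t • v) - f' (x + (0:ℝ) • v), v⟫ := by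
      rw [inner_sub_left]
    have h2 : ⟪f' (x + t • v) - f' (x + (0:ℝ) • v), v⟫ ≤ Lf * t * ‖v‖ ^ 2 := by
      calc ⟪f' (x + t • v) - f' (x + (0:ℝ) • v), v⟫
          ≤ ‖f' (x + t • v) - f' (x + (0:ℝ) • v)‖ * ‖v‖ := real_inner_le_norm _ _
        _ ≤ (Lf * ‖(x + t • v) - (x + (0:ℝ) • v)‖) * ‖v‖ := by
            gcongr; exact hlip _ _
        _ = Lf * (|t| * ‖v‖) * ‖v‖ := by
            congr 2
            rw [show (x + t • v) - (x + (0:ℝ) • v) = t • v by module, norm_smul,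
              Real.norm_eq_abs]
        _ = Lf * |t| * ‖v‖ ^ 2 := by ring
        _ ≤ Lf * t * ‖v‖ ^ 2 := by
            rw [abs_of_nonneg ht.1]
    linarith
  have hint : ∫ t in (0:ℝ)..1, (ψ 0 + Lf * t * ‖v‖ ^ 2) = ψ 0 + Lf / 2 * ‖v‖ ^ 2 := by
    rw [intervalIntegral.integral_add (intervalIntegrable_const)
      (by apply Continuous.intervalIntegrable; continuity)]
    simp only [intervalIntegral.integral_const, smul_eq_mul]
    have : ∫ t in (0:ℝ)..1, Lf * t * ‖v‖ ^ 2 = Lf / 2 * ‖v‖ ^ 2 := by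
      have : (fun t : ℝ => Lf * t * ‖v‖ ^ 2) = fun t : ℝ => (Lf * ‖v‖ ^ 2) * t := by
        funext t; ring
      rw [this, intervalIntegral.integral_const_mul, integral_id]
      ring
    rw [this]; ring
  have hψ0 : ψ 0 = ⟪f' x, v⟫ := by simp [hψ]
  have h10 : x + (1:ℝ) • v = y := by rw [hv]; module
  have h00 : x + (0:ℝ) • v = x := by module
  rw [h10, h00] at hftc
  rw [hψ0] at hbound hint
  linarith [hftc, hbound, hint.le, hint.ge]

end aux

set_option maxHeartbeats 1000000 in
/-- Pure real arithmetic for one step of the accelerated linearized ALM. -/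
lemma aux_step_arith (K γ η Lf β : ℝ)
    (Fk1 Fk Fs ck ck1 ilr ilmr iI a p q ρ Lk Lk1 : ℝ)
    (hK1 : 1 ≤ K) (hγ : 0 < γ) (hLf : 0 ≤ Lf) (hη : 2*Lf ≤ η) (hβ : K*γ/2 ≤ β)
    (ha : 0 ≤ a) (hρ : 0 ≤ ρ)
    (hF : Fk1 ≤ (1 - 2/(K+1))*Fk + (2/(K+1))*Fs + (2/(K+1))*iI + Lf/2*((2/(K+1))^2*a))
    (hI : iI = ilr - β*ρ - (η/K)*((a+p-q)/2))
    (hl : Lk1 = Lk - 2*(K*γ)*(ilr-ilmr) + (K*γ)^2*ρ)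
    (hck : ck1 = (1 - 2/(K+1))*ck + (2/(K+1))*ilmr) :
    (K+1)*K*(Fk1 - Fs - ck1) + (1/γ)*Lk1 + η*p
      ≤ K*(K-1)*(Fk - Fs - ck) + (1/γ)*Lk + η*q := by
  have hK0 : (0:ℝ) < K := by linarith
  have hK10 : (0:ℝ) < K + 1 := by linarith
  have hKne : K ≠ 0 := ne_of_gt hK0
  have hK1ne : K + 1 ≠ 0 := ne_of_gt hK10
  obtain ⟨α, hα⟩ : ∃ α : ℝ, α = 2/(K+1) := ⟨_, rfl⟩
  rw [← hα] at hF hck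
  have hα0 : (0:ℝ) < α := by rw [hα]; positivity
  have hα1 : α ≤ 1 := by rw [hα, div_le_one hK10]; linarith
  have hαK : α*(K+1) = 2 := by rw [hα]; field_simp
  have hη0 : (0:ℝ) ≤ η := by linarith
  -- coefficient bound: K·Lf·α ≤ η
  have h0 : Lf*(α*(K+1)) = Lf*2 := by rw [hαK]
  have h1 : K*Lf*α ≤ η := by nlinarith [mul_nonneg hLf hα0.le]
  have hacoef : Lf/2*α^2 ≤ α*(η/K)/2 := by
    have h2 : α*(η/K)/2 = α*η/(2*K) := by ring
    rw [h2, le_div_iff₀ (by positivity : (0:ℝ) < 2*K)]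
    nlinarith [mul_le_mul_of_nonneg_right h1 hα0.le]
  have had : Lf/2*(α^2*a) ≤ α*(η/K)/2*a := by
    have := mul_le_mul_of_nonneg_right hacoef ha
    linarith [this]
  have hstep2 : Fk1 - Fs - ck1
      ≤ (1-α)*(Fk - Fs - ck) + α*((ilr - ilmr) - β*ρ - (η/K)*((p-q)/2)) := by
    have hIs' : α*iI = α*(ilr - β*ρ - (η/K)*((a+p-q)/2)) := by rw [hI]
    have hexp : α*(ilr - β*ρ - (η/K)*((a+p-q)/2))
        = α*((ilr - ilmr) - β*ρ - (η/K)*((p-q)/2)) + α*ilmr - α*(η/K)/2*a := by ring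
    linarith [hF, hIs', hexp, had, hck]
  have hmul := mul_le_mul_of_nonneg_left hstep2 (by positivity : (0:ℝ) ≤ K*(K+1))
  have heqRHS : K*(K+1)*((1-α)*(Fk - Fs - ck) + α*((ilr - ilmr) - β*ρ - (η/K)*((p-q)/2)))
      = K*(K-1)*(Fk - Fs - ck) + 2*K*(ilr - ilmr) - 2*K*β*ρ - η*(p-q) := by
    rw [hα]; field_simp; ring
  have hl3 : (1/γ)*Lk1 = (1/γ)*Lk - 2*K*(ilr - ilmr) + K^2*γ*ρ := by
    rw [hl]; field_simp
  have hρc : (0:ℝ) ≤ (2*K*β - K^2*γ)*ρ := by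
    apply mul_nonneg _ hρ
    nlinarith [mul_le_mul_of_nonneg_left hβ (by linarith : (0:ℝ) ≤ 2*K)]
  linarith [hmul, heqRHS, hl3, hρc]

set_option maxHeartbeats 1000000 in
/-- O(1/t²) rate of the accelerated linearized ALM (Theorem 2.7 in the paper). -/
theorem stmt_9 {E H : Type*}
    [NormedAddCommGroup E] [InnerProductSpace ℝ E] [FiniteDimensional ℝ E]
    [NormedAddCommGroup H] [InnerProductSpace ℝ H] [FiniteDimensional ℝ H]
    (A : E →L[ℝ] H) (b : H)
    (f : E → ℝ) (f' : E → E) (Lf : ℝ) (hLf : 0 ≤ Lf)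
    (hfconv : ConvexOn ℝ Set.univ f)
    (hgrad : ∀ x : E, HasGradientAt f (f' x) x)
    (hlip : ∀ x x' : E, ‖f' x - f' x'‖ ≤ Lf * ‖x - x'‖)
    (g : E → ℝ) (hgconv : ConvexOn ℝ Set.univ g)
    (γ η : ℝ) (hγ : 0 < γ) (hη : 2 * Lf ≤ η)
    (βk : ℕ → ℝ) (hβk : ∀ k : ℕ, 1 ≤ k → (k : ℝ) * γ / 2 ≤ βk k)
    (x xb : ℕ → E) (lam : ℕ → H)
    (hinit : xb 1 = x 1) (hlam1 : lam 1 = 0)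
    (hopt : ∀ k : ℕ, 1 ≤ k → ∃ u : E,
      (∀ x' : E, g x' ≥ g (x (k+1)) + ⟪u, x' - x (k+1)⟫) ∧
      f' ((1 - 2 / ((k : ℝ) + 1)) • xb k + (2 / ((k : ℝ) + 1)) • x k) + u
        - (ContinuousLinearMap.adjoint A) (lam k)
        + βk k • (ContinuousLinearMap.adjoint A) (A (x (k+1)) - b)
        + (η / (k : ℝ)) • (x (k+1) - x k) = 0)
    (hxb : ∀ k : ℕ, 1 ≤ k →
      xb (k+1) = (1 - 2 / ((k : ℝ) + 1)) • xb k + (2 / ((k : ℝ) + 1)) • x (k+1))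
    (hlam : ∀ k : ℕ, 1 ≤ k → lam (k+1) = lam k - ((k : ℝ) * γ) • (A (x (k+1)) - b))
    (xs : E) (ls : H)
    (hfeas : A xs = b) (hls : ls ≠ 0)
    (hkkt : ∀ x' : E, g x' ≥ g xs + ⟪(ContinuousLinearMap.adjoint A) ls - f' xs, x' - xs⟫) :
    ∀ t : ℕ, 1 ≤ t →
      |(f (xb (t+1)) + g (xb (t+1))) - (f xs + g xs)|
          ≤ (1 / ((t : ℝ) * ((t : ℝ) + 1))) * (η * ‖x 1 - xs‖ ^ 2 + 4 * ‖ls‖ ^ 2 / γ) ∧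
      ‖A (xb (t+1)) - b‖
          ≤ (1 / ((t : ℝ) * ((t : ℝ) + 1) * ‖ls‖)) * (η * ‖x 1 - xs‖ ^ 2 + 4 * ‖ls‖ ^ 2 / γ) := by
  have hη0 : 0 ≤ η := le_trans (by linarith) hη
  have key : ∀ lm : H, ∀ t : ℕ, 1 ≤ t →
      (t : ℝ) * ((t : ℝ) + 1) *
        ((f (xb (t+1)) + g (xb (t+1))) - (f xs + g xs) - ⟪lm, A (xb (t+1)) - b⟫)
        ≤ η * ‖x 1 - xs‖ ^ 2 + ‖lm‖ ^ 2 / γ := by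
    intro lm
    have hstep : ∀ k : ℕ, 1 ≤ k →
        ((k:ℝ)+1)*(k:ℝ)*((f (xb (k+1)) + g (xb (k+1))) - (f xs + g xs)
            - ⟪lm, A (xb (k+1)) - b⟫)
          + (1/γ)*‖lam (k+1) - lm‖^2 + η*‖x (k+1) - xs‖^2
        ≤ (k:ℝ)*((k:ℝ)-1)*((f (xb k) + g (xb k)) - (f xs + g xs)
            - ⟪lm, A (xb k) - b⟫)
          + (1/γ)*‖lam k - lm‖^2 + η*‖x k - xs‖^2 := by
      intro k hk
      obtain ⟨u, hu, heq⟩ := hopt k hk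
      have hxbk := hxb k hk
      have hlamk := hlam k hk
      have hβ := hβk k hk
      have hK1 : (1:ℝ) ≤ (k:ℝ) := by exact_mod_cast hk
      have hK0 : (0:ℝ) < (k:ℝ) := by linarith
      have hK10 : (0:ℝ) < (k:ℝ)+1 := by linarith
      have hα0 : (0:ℝ) < 2/((k:ℝ)+1) := by positivity
      have hα1 : 2/((k:ℝ)+1) ≤ 1 := by rw [div_le_one hK10]; linarith
      set xh : E := (1 - 2/((k:ℝ)+1)) • xb k + (2/((k:ℝ)+1)) • x k with hxh
      set r : H := A (x (k+1)) - b with hr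
      set w : E := x (k+1) - xs with hw
      -- inner product form of the optimality condition
      have hI : ⟪f' xh, w⟫ + ⟪u, w⟫
          = ⟪lam k, r⟫ - βk k * ‖r‖^2 - (η/(k:ℝ)) * ⟪x (k+1) - x k, w⟫ := by
        have h0 : ⟪f' xh + u - (ContinuousLinearMap.adjoint A) (lam k)
            + βk k • (ContinuousLinearMap.adjoint A) r + (η/(k:ℝ)) • (x (k+1) - x k), w⟫
            = 0 := by rw [heq]; exact inner_zero_left w
        simp only [inner_add_left, inner_sub_left, real_inner_smul_left] at h0
        rw [ContinuousLinearMap.adjoint_inner_left, ContinuousLinearMap.adjoint_inner_left]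
          at h0
        have hAw : A w = r := by rw [hw, map_sub, hfeas, hr]
        rw [hAw, real_inner_self_eq_norm_sq] at h0
        rw [inner_sub_left]
        linarith
      -- three-point identity
      have hs : ⟪x (k+1) - x k, w⟫
          = (‖x (k+1) - x k‖^2 + ‖w‖^2 - ‖x k - xs‖^2)/2 := by
        have hn := norm_sub_sq_real (x (k+1) - x k) w
        rw [show x (k+1) - x k - w = xs - x k from by rw [hw]; abel] at hn
        rw [show ‖xs - x k‖ = ‖x k - xs‖ from norm_sub_rev _ _] at hn
        linarith
      have hIs : ⟪f' xh, w⟫ + ⟪u, w⟫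
          = ⟪lam k, r⟫ - βk k * ‖r‖^2
            - (η/(k:ℝ)) * ((‖x (k+1) - x k‖^2 + ‖w‖^2 - ‖x k - xs‖^2)/2) := by
        rw [hI, hs]
      -- dual update identity
      have hlid : ‖lam (k+1) - lm‖^2
          = ‖lam k - lm‖^2 - 2*((k:ℝ)*γ)*(⟪lam k, r⟫ - ⟪lm, r⟫) + ((k:ℝ)*γ)^2*‖r‖^2 := by
        have h1 : lam (k+1) - lm = (lam k - lm) - ((k:ℝ)*γ) • r := by
          rw [hlamk]; abel
        rw [h1, norm_sub_sq_real, real_inner_smul_right, inner_sub_left, norm_smul,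
          Real.norm_eq_abs, mul_pow, sq_abs]
        ring
      -- primal averaged constraint identity
      have hck : ⟪lm, A (xb (k+1)) - b⟫
          = (1 - 2/((k:ℝ)+1))*⟪lm, A (xb k) - b⟫ + (2/((k:ℝ)+1))*⟪lm, r⟫ := by
        have h1 : A (xb (k+1)) - b
            = (1 - 2/((k:ℝ)+1)) • (A (xb k) - b) + (2/((k:ℝ)+1)) • r := by
          rw [hxbk, map_add, map_smul, map_smul, hr]
          module
        rw [h1, inner_add_right, real_inner_smul_right, real_inner_smul_right]
      -- descent lemma and convexity
      have hfdesc := aux_descent f f' Lf hgrad hlip xh (xb (k+1))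
      have hdiff : xb (k+1) - xh = (2/((k:ℝ)+1)) • (x (k+1) - x k) := by
        rw [hxbk, hxh]; module
      have hnorm : ‖xb (k+1) - xh‖^2 = (2/((k:ℝ)+1))^2 * ‖x (k+1) - x k‖^2 := by
        rw [hdiff, norm_smul, Real.norm_eq_abs, mul_pow, sq_abs]
      have hnorm2 : Lf/2*‖xb (k+1) - xh‖^2
          = Lf/2*((2/((k:ℝ)+1))^2 * ‖x (k+1) - x k‖^2) := by rw [hnorm]
      have hdec : xb (k+1) - xh = (1 - 2/((k:ℝ)+1)) • (xb k - xh)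
          + (2/((k:ℝ)+1)) • (xs - xh) + (2/((k:ℝ)+1)) • w := by
        rw [hxbk, hxh, hw]; module
      have hinner1 : ⟪f' xh, xb (k+1) - xh⟫
          = (1 - 2/((k:ℝ)+1))*⟪f' xh, xb k - xh⟫ + (2/((k:ℝ)+1))*⟪f' xh, xs - xh⟫
            + (2/((k:ℝ)+1))*⟪f' xh, w⟫ := by
        rw [hdec, inner_add_right, inner_add_right, real_inner_smul_right,
          real_inner_smul_right, real_inner_smul_right]
      have hcv1 := aux_convex_lower f f' hfconv hgrad xh (xb k)
      have hcv2 := aux_convex_lower f f' hfconv hgrad xh xs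
      have h1m := mul_le_mul_of_nonneg_left hcv1 (by linarith : (0:ℝ) ≤ 1 - 2/((k:ℝ)+1))
      have h2m := mul_le_mul_of_nonneg_left hcv2 hα0.le
      have hgc : g (xb (k+1)) ≤ (1 - 2/((k:ℝ)+1)) * g (xb k) + (2/((k:ℝ)+1)) * g (x (k+1)) := by
        rw [hxbk]
        exact hgconv.2 trivial trivial (by linarith) hα0.le (by ring)
      have hgu : g (x (k+1)) ≤ g xs + ⟪u, w⟫ := by
        have h := hu xs
        rw [show xs - x (k+1) = -w from by rw [hw]; abel, inner_neg_right] at h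
        linarith
      have h3m := mul_le_mul_of_nonneg_left hgu hα0.le
      -- combined objective bound
      have hF : f (xb (k+1)) + g (xb (k+1))
          ≤ (1 - 2/((k:ℝ)+1))*(f (xb k) + g (xb k)) + (2/((k:ℝ)+1))*(f xs + g xs)
            + (2/((k:ℝ)+1))*(⟪f' xh, w⟫ + ⟪u, w⟫)
            + Lf/2*((2/((k:ℝ)+1))^2*‖x (k+1) - x k‖^2) := by
        linarith [hfdesc, hinner1, hnorm2, h1m, h2m, hgc, h3m]
      exact aux_step_arith (k:ℝ) γ η Lf (βk k)
        (f (xb (k+1)) + g (xb (k+1))) (f (xb k) + g (xb k)) (f xs + g xs)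
        ⟪lm, A (xb k) - b⟫ ⟪lm, A (xb (k+1)) - b⟫ ⟪lam k, r⟫ ⟪lm, r⟫
        (⟪f' xh, w⟫ + ⟪u, w⟫) (‖x (k+1) - x k‖^2) (‖w‖^2) (‖x k - xs‖^2) (‖r‖^2)
        (‖lam k - lm‖^2) (‖lam (k+1) - lm‖^2)
        hK1 hγ hLf hη hβ (by positivity) (by positivity) hF hIs hlid hck
    -- telescoping
    have htel : ∀ t : ℕ, 1 ≤ t →
        (t:ℝ)*((t:ℝ)+1)*((f (xb (t+1)) + g (xb (t+1))) - (f xs + g xs)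
            - ⟪lm, A (xb (t+1)) - b⟫)
          + (1/γ)*‖lam (t+1) - lm‖^2 + η*‖x (t+1) - xs‖^2
        ≤ (1/γ)*‖lm‖^2 + η*‖x 1 - xs‖^2 := by
      intro t ht
      induction t, ht using Nat.le_induction with
      | base =>
          have h := hstep 1 le_rfl
          rw [hlam1] at h
          simp only [zero_sub, norm_neg] at h
          push_cast at h ⊢
          linarith
      | succ n hn ih =>
          have h := hstep (n+1) (by omega)
          push_cast at h ih ⊢
          linarith
    intro t ht
    have h := htel t ht
    have h1 : (0:ℝ) ≤ (1/γ)*‖lam (t+1) - lm‖^2 := by positivity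
    have h2 : (0:ℝ) ≤ η*‖x (t+1) - xs‖^2 := by positivity
    have h3 : ‖lm‖^2/γ = (1/γ)*‖lm‖^2 := by ring
    linarith
  -- deduce the two bounds
  intro t ht
  have hT1 : (1:ℝ) ≤ (t:ℝ) := by exact_mod_cast ht
  have hT0 : (0:ℝ) < (t:ℝ)*((t:ℝ)+1) := by nlinarith
  set rb : H := A (xb (t+1)) - b with hrbdef
  have hls0 : (0:ℝ) < ‖ls‖ := norm_pos_iff.mpr hls
  have hCnn : (0:ℝ) ≤ η*‖x 1 - xs‖^2 + 4*‖ls‖^2/γ := by positivity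
  -- lower bound from KKT
  have hlow : f xs + g xs + ⟪ls, rb⟫ ≤ f (xb (t+1)) + g (xb (t+1)) := by
    have h1 := aux_convex_lower f f' hfconv hgrad xs (xb (t+1))
    have h2 := hkkt (xb (t+1))
    rw [inner_sub_left] at h2
    have h3 : ⟪(ContinuousLinearMap.adjoint A) ls, xb (t+1) - xs⟫ = ⟪ls, rb⟫ := by
      rw [ContinuousLinearMap.adjoint_inner_left, map_sub, hfeas, ← hrbdef]
    linarith
  have hip : -(‖ls‖*‖rb‖) ≤ ⟪ls, rb⟫ := (abs_le.mp (abs_real_inner_le_norm ls rb)).1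
  -- objective upper bound (lm = 0)
  have hup : (t:ℝ)*((t:ℝ)+1)*((f (xb (t+1)) + g (xb (t+1))) - (f xs + g xs))
      ≤ η*‖x 1 - xs‖^2 := by
    have h := key 0 t ht
    simpa using h
  -- feasibility bound
  have hrb : ‖ls‖*‖rb‖ ≤ (1/((t:ℝ)*((t:ℝ)+1)))*(η*‖x 1 - xs‖^2 + 4*‖ls‖^2/γ) := by
    rcases eq_or_ne rb 0 with h0 | h0
    · rw [h0, norm_zero, mul_zero]; positivity
    · have hrb0 : (0:ℝ) < ‖rb‖ := norm_pos_iff.mpr h0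
      have hkey := key (-((2*‖ls‖/‖rb‖) • rb)) t ht
      rw [← hrbdef] at hkey
      have hin : ⟪-((2*‖ls‖/‖rb‖) • rb), rb⟫ = -(2*‖ls‖*‖rb‖) := by
        rw [inner_neg_left, real_inner_smul_left, real_inner_self_eq_norm_sq]
        field_simp
      have hnm : ‖-((2*‖ls‖/‖rb‖) • rb)‖^2 = 4*‖ls‖^2 := by
        rw [norm_neg, norm_smul, Real.norm_eq_abs, abs_of_nonneg (by positivity)]
        field_simp; ring
      rw [hin, hnm] at hkey
      have hmain : (t:ℝ)*((t:ℝ)+1)*(‖ls‖*‖rb‖) ≤ η*‖x 1 - xs‖^2 + 4*‖ls‖^2/γ := by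
        nlinarith [hkey, hlow, hip, hT0]
      calc ‖ls‖*‖rb‖
          = (1/((t:ℝ)*((t:ℝ)+1)))*((t:ℝ)*((t:ℝ)+1)*(‖ls‖*‖rb‖)) := by
            field_simp
        _ ≤ (1/((t:ℝ)*((t:ℝ)+1)))*(η*‖x 1 - xs‖^2 + 4*‖ls‖^2/γ) := by
            apply mul_le_mul_of_nonneg_left hmain (by positivity)
  constructor
  · rw [abs_le]
    constructor
    · linarith [hlow, hip, hrb]
    · have hX : (t:ℝ)*((t:ℝ)+1)*((f (xb (t+1)) + g (xb (t+1))) - (f xs + g xs))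
          ≤ η*‖x 1 - xs‖^2 + 4*‖ls‖^2/γ := by
        have h4 : (0:ℝ) ≤ 4*‖ls‖^2/γ := by positivity
        linarith
      calc (f (xb (t+1)) + g (xb (t+1))) - (f xs + g xs)
          = (1/((t:ℝ)*((t:ℝ)+1)))*((t:ℝ)*((t:ℝ)+1)
              *((f (xb (t+1)) + g (xb (t+1))) - (f xs + g xs))) := by
            field_simp
        _ ≤ (1/((t:ℝ)*((t:ℝ)+1)))*(η*‖x 1 - xs‖^2 + 4*‖ls‖^2/γ) := by
            apply mul_le_mul_of_nonneg_left hX (by positivity)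
  · have hTne : ((t:ℝ)*((t:ℝ)+1)) ≠ 0 := ne_of_gt hT0
    have hlsne : ‖ls‖ ≠ 0 := ne_of_gt hls0
    calc ‖rb‖ = (1/‖ls‖)*(‖ls‖*‖rb‖) := by field_simp
      _ ≤ (1/‖ls‖)*((1/((t:ℝ)*((t:ℝ)+1)))*(η*‖x 1 - xs‖^2 + 4*‖ls‖^2/γ)) := by
          apply mul_le_mul_of_nonneg_left hrb (by positivity)
      _ = (1/((t:ℝ)*((t:ℝ)+1)*‖ls‖))*(η*‖x 1 - xs‖^2 + 4*‖ls‖^2/γ) := by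
          field_simp
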